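/- Let u: ℕ₀ → (0,∞) satisfy u(k) ∼ C_α/(L(k) k^{1−α}) as k → ∞, with α ∈ (0,1), C_α > 0, and L slowly varying. Then ∑_{k=0}^{ℓ−1} u(k) ∼ C_α ℓ^α/(α L(ℓ)) as ℓ → ∞. -/

import Mathlib

open Filter

/-- A sequence `L : ℕ → (0,∞)` is slowly varying if `L(⌊λ n⌋)/L(n) → 1` as `n → ∞`
for every `λ > 0`. -/
def SlowlyVarying (L : ℕ → ℝ) : Prop :=
  (∀ n, 0 < L n) ∧
    ∀ lam : ℝ, 0 < lam →
      Tendsto (fun n : ℕ => L ⌊lam * n⌋₊ / L n) atTop (nhds 1)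

namespace KaramataAux

open MeasureTheory

noncomputable def W (αv Cα : ℝ) (L : ℕ → ℝ) (k : ℕ) : ℝ := Cα / (L k * (k:ℝ)^(1-αv))
noncomputable def Tt (αv Cα : ℝ) (L : ℕ → ℝ) (ℓ : ℕ) : ℝ := ∑ k ∈ Finset.range ℓ, W αv Cα L k
noncomputable def Rr (αv Cα : ℝ) (L : ℕ → ℝ) (ℓ : ℕ) : ℝ :=
  Tt αv Cα L ℓ * (αv * L ℓ) / (Cα * (ℓ:ℝ)^αv)

variable {αv Cα : ℝ} {L : ℕ → ℝ}

lemma W_nonneg (hCα : 0 < Cα) (hLpos : ∀ n, 0 < L n) (k : ℕ) : 0 ≤ W αv Cα L k := by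
  unfold W
  have := hLpos k
  have : (0:ℝ) ≤ L k * (k:ℝ)^(1-αv) := by positivity
  positivity

lemma Tt_nonneg (hCα : 0 < Cα) (hLpos : ∀ n, 0 < L n) (ℓ : ℕ) : 0 ≤ Tt αv Cα L ℓ :=
  Finset.sum_nonneg fun k _ => W_nonneg hCα hLpos k

lemma Tt_mono (hCα : 0 < Cα) (hLpos : ∀ n, 0 < L n) : Monotone (Tt αv Cα L) := by
  intro x y hxy
  unfold Tt
  exact Finset.sum_le_sum_of_subset_of_nonneg (Finset.range_subset_range.2 hxy)
    (fun k _ _ => W_nonneg hCα hLpos k)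

lemma Rr_nonneg (hα0 : 0 < αv) (hCα : 0 < Cα) (hLpos : ∀ n, 0 < L n) (ℓ : ℕ) :
    0 ≤ Rr αv Cα L ℓ := by
  unfold Rr
  have h1 := Tt_nonneg (αv := αv) hCα hLpos ℓ
  have h2 := hLpos ℓ
  have h3 : (0:ℝ) ≤ (ℓ:ℝ)^αv := Real.rpow_nonneg (Nat.cast_nonneg _) _
  positivity

lemma W_eq (k : ℕ) : W αv Cα L k = Cα * (L k)⁻¹ * (k:ℝ)^(αv - 1) := by
  unfold W
  rw [div_eq_mul_inv, mul_inv, show (αv - 1) = -(1-αv) by ring,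
    Real.rpow_neg (Nat.cast_nonneg k), mul_assoc]

lemma block_up (hCα : 0 < Cα) (hLpos : ∀ n, 0 < L n) {e' : ℝ} {a ℓ : ℕ}
    (hb : ∀ k ∈ Finset.Ico a ℓ, Real.log (L ℓ) - Real.log (L k) ≤ e') :
    ∑ k ∈ Finset.Ico a ℓ, W αv Cα L k
      ≤ Real.exp e' * Cα * (L ℓ)⁻¹ * ∑ k ∈ Finset.Ico a ℓ, (k:ℝ)^(αv-1) := by
  rw [Finset.mul_sum]
  apply Finset.sum_le_sum
  intro k hk
  rw [W_eq]
  have hLk := hLpos k; have hLl := hLpos ℓ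
  have key : (L k)⁻¹ ≤ Real.exp e' * (L ℓ)⁻¹ := by
    rw [← Real.exp_log hLk, ← Real.exp_log hLl, ← Real.exp_neg, ← Real.exp_neg, ← Real.exp_add]
    apply Real.exp_le_exp.2
    have := hb k hk
    linarith
  have hk0 : (0:ℝ) ≤ (k:ℝ)^(αv-1) := Real.rpow_nonneg (Nat.cast_nonneg _) _
  calc Cα * (L k)⁻¹ * (k:ℝ)^(αv-1) ≤ Cα * (Real.exp e' * (L ℓ)⁻¹) * (k:ℝ)^(αv-1) := by
        apply mul_le_mul_of_nonneg_right _ hk0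
        exact mul_le_mul_of_nonneg_left key (le_of_lt hCα)
    _ = Real.exp e' * Cα * (L ℓ)⁻¹ * (k:ℝ)^(αv-1) := by ring

lemma block_lo (hCα : 0 < Cα) (hLpos : ∀ n, 0 < L n) {e' : ℝ} {a ℓ : ℕ}
    (hb : ∀ k ∈ Finset.Ico a ℓ, Real.log (L k) - Real.log (L ℓ) ≤ e') :
    Real.exp (-e') * Cα * (L ℓ)⁻¹ * ∑ k ∈ Finset.Ico a ℓ, (k:ℝ)^(αv-1)
      ≤ ∑ k ∈ Finset.Ico a ℓ, W αv Cα L k := by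
  rw [Finset.mul_sum]
  apply Finset.sum_le_sum
  intro k hk
  rw [W_eq]
  have hLk := hLpos k; have hLl := hLpos ℓ
  have key : Real.exp (-e') * (L ℓ)⁻¹ ≤ (L k)⁻¹ := by
    rw [← Real.exp_log hLk, ← Real.exp_log hLl, ← Real.exp_neg, ← Real.exp_neg, ← Real.exp_add]
    apply Real.exp_le_exp.2
    have := hb k hk
    linarith
  have hk0 : (0:ℝ) ≤ (k:ℝ)^(αv-1) := Real.rpow_nonneg (Nat.cast_nonneg _) _
  calc Real.exp (-e') * Cα * (L ℓ)⁻¹ * (k:ℝ)^(αv-1)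
      = Cα * (Real.exp (-e') * (L ℓ)⁻¹) * (k:ℝ)^(αv-1) := by ring
    _ ≤ Cα * (L k)⁻¹ * (k:ℝ)^(αv-1) := by
        apply mul_le_mul_of_nonneg_right _ hk0
        exact mul_le_mul_of_nonneg_left key (le_of_lt hCα)

lemma logratio {L : ℕ → ℝ} (hL : SlowlyVarying L) {lam : ℝ} (hlam : 0 < lam) :
    Tendsto (fun n : ℕ => Real.log (L ⌊lam * n⌋₊) - Real.log (L n)) atTop (nhds 0) := by
  have h := (hL.2 lam hlam)
  have hlog : Tendsto (fun n : ℕ => Real.log (L ⌊lam * n⌋₊ / L n)) atTop (nhds 0) := by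
    have := (Real.continuousAt_log (by norm_num : (1:ℝ) ≠ 0)).tendsto.comp h
    simpa [Function.comp_def] using this
  refine hlog.congr fun n => ?_
  rw [Real.log_div (ne_of_gt (hL.1 _)) (ne_of_gt (hL.1 _))]

lemma floor_tendsto {lam : ℝ} (hlam : 0 < lam) :
    Tendsto (fun n : ℕ => ⌊lam * n⌋₊) atTop atTop := by
  apply tendsto_nat_floor_atTop.comp
  exact Tendsto.const_mul_atTop hlam tendsto_natCast_atTop_atTop

lemma sqrt2_floor_id (n : ℕ) (hn : 1 ≤ n) :
    ⌊(Real.sqrt 2)⁻¹ * (⌊Real.sqrt 2 * n⌋₊ : ℝ)⌋₊ = n - 1 := by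
  have h2 : (1:ℝ) < Real.sqrt 2 := by
    rw [show (1:ℝ) = Real.sqrt 1 by simp]
    exact Real.sqrt_lt_sqrt (by norm_num) (by norm_num)
  have h2pos : (0:ℝ) < Real.sqrt 2 := by linarith
  have hxpos : (0:ℝ) ≤ Real.sqrt 2 * n := by positivity
  have hirr : Irrational (Real.sqrt 2 * n) := irrational_sqrt_two.mul_natCast (by omega)
  have hle : ((⌊Real.sqrt 2 * n⌋₊ : ℕ) : ℝ) ≤ Real.sqrt 2 * n := Nat.floor_le hxpos
  have hne : ((⌊Real.sqrt 2 * n⌋₊ : ℕ) : ℝ) ≠ Real.sqrt 2 * n := fun h => hirr.ne_nat _ h.symm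
  have hlt : ((⌊Real.sqrt 2 * n⌋₊ : ℕ) : ℝ) < Real.sqrt 2 * n := lt_of_le_of_ne hle hne
  have hgt : Real.sqrt 2 * n - 1 < ((⌊Real.sqrt 2 * n⌋₊ : ℕ) : ℝ) := by
    have := Nat.lt_floor_add_one (Real.sqrt 2 * n); linarith
  set m := ⌊Real.sqrt 2 * n⌋₊
  have hinv : (Real.sqrt 2)⁻¹ * (Real.sqrt 2 * n) = n := by
    field_simp
  rw [Nat.floor_eq_iff (by positivity)]
  constructor
  · have : ((n:ℝ) - 1) ≤ (Real.sqrt 2)⁻¹ * m := by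
      have h1 : (Real.sqrt 2)⁻¹ * (Real.sqrt 2 * n - 1) < (Real.sqrt 2)⁻¹ * m :=
        mul_lt_mul_of_pos_left hgt (by positivity)
      have h2' : (Real.sqrt 2)⁻¹ ≤ 1 := by
        rw [inv_le_one_iff₀]; right; linarith
      have h3 : (Real.sqrt 2)⁻¹ * (Real.sqrt 2 * n - 1) = n - (Real.sqrt 2)⁻¹ := by
        rw [mul_sub, hinv, mul_one]
      nlinarith
    calc ((n - 1 : ℕ) : ℝ) = (n : ℝ) - 1 := by
          have : (1:ℕ) ≤ n := hn
          push_cast [Nat.cast_sub this]; ring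
      _ ≤ _ := this
  · have h1 : (Real.sqrt 2)⁻¹ * (m:ℝ) < (Real.sqrt 2)⁻¹ * (Real.sqrt 2 * n) :=
      mul_lt_mul_of_pos_left hlt (by positivity)
    rw [hinv] at h1
    have : ((n - 1 : ℕ) : ℝ) + 1 = n := by
      have : (1:ℕ) ≤ n := hn
      push_cast [Nat.cast_sub this]; ring
    linarith

lemma log_pred {L : ℕ → ℝ} (hL : SlowlyVarying L) :
    Tendsto (fun n : ℕ => Real.log (L (n - 1)) - Real.log (L n)) atTop (nhds 0) := by
  have h2 : (1:ℝ) < Real.sqrt 2 := by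
    rw [show (1:ℝ) = Real.sqrt 1 by simp]
    exact Real.sqrt_lt_sqrt (by norm_num) (by norm_num)
  have h2pos : (0:ℝ) < Real.sqrt 2 := by linarith
  have h1 := logratio hL h2pos
  have h2' := (logratio hL (show (0:ℝ) < (Real.sqrt 2)⁻¹ by positivity)).comp
    (floor_tendsto h2pos)
  have hsum := h2'.add h1
  rw [add_zero] at hsum
  have : Tendsto (fun n : ℕ => Real.log (L (n-1)) - Real.log (L n)) atTop (nhds 0) := by
    refine hsum.congr' ?_
    filter_upwards [eventually_ge_atTop 1] with n hn
    simp only [Function.comp]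
    rw [sqrt2_floor_id n hn]
    ring
  exact this

lemma log_succ {L : ℕ → ℝ} (hL : SlowlyVarying L) :
    Tendsto (fun n : ℕ => Real.log (L (n + 1)) - Real.log (L n)) atTop (nhds 0) := by
  have := ((log_pred hL).comp (tendsto_add_atTop_nat 1)).neg
  rw [neg_zero] at this
  refine this.congr fun n => ?_
  simp only [Function.comp, Nat.add_sub_cancel]
  ring

lemma log_floor_succ {L : ℕ → ℝ} (hL : SlowlyVarying L) {lam : ℝ} (hlam : 0 < lam) :
    Tendsto (fun n : ℕ => Real.log (L (⌊lam * n⌋₊ + 1)) - Real.log (L n)) atTop (nhds 0) := by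
  have h1 := (log_succ hL).comp (floor_tendsto hlam)
  have h2 := logratio hL hlam
  have := h1.add h2
  rw [add_zero] at this
  refine this.congr fun n => ?_
  simp only [Function.comp]; ring

lemma uct {L : ℕ → ℝ} (hL : SlowlyVarying L) {δ ε : ℝ} (hδ0 : 0 < δ) (hδ1 : δ < 1) (hε : 0 < ε) :
    ∀ᶠ ℓ : ℕ in atTop, ∀ k : ℕ, δ * ℓ ≤ k → k ≤ ℓ →
      |Real.log (L k) - Real.log (L ℓ)| ≤ ε := by
  set h : ℕ → ℝ := fun n => Real.log (L n) with hh
  set f : ℕ → ℝ → ℝ := fun n t =>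
    |h ⌊Real.exp t * (n:ℝ)⌋₊ - h n| + |h (⌊Real.exp t * (n:ℝ)⌋₊ + 1) - h n| with hf
  have hfnn : ∀ n t, 0 ≤ f n t := fun n t => add_nonneg (abs_nonneg _) (abs_nonneg _)
  have hmeas : ∀ n, StronglyMeasurable (f n) := by
    intro n
    have hfl : Measurable fun t : ℝ => ⌊Real.exp t * (n:ℝ)⌋₊ :=
      (Real.measurable_exp.mul_const _).nat_floor
    have m1 : Measurable fun t : ℝ => h ⌊Real.exp t * (n:ℝ)⌋₊ :=
      Measurable.comp (measurable_from_top (f := h)) hfl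
    have m2 : Measurable fun t : ℝ => h (⌊Real.exp t * (n:ℝ)⌋₊ + 1) :=
      Measurable.comp (measurable_from_top (f := h)) (hfl.add_const 1)
    exact (((m1.sub measurable_const).abs).add
      ((m2.sub measurable_const).abs)).stronglyMeasurable
  have hpt : ∀ t : ℝ, Tendsto (fun n => f n t) atTop (nhds 0) := by
    intro t
    have h1 := (logratio hL (Real.exp_pos t)).abs
    have h2 := (log_floor_succ hL (Real.exp_pos t)).abs
    rw [abs_zero] at h1 h2
    simpa using h1.add h2
  set T : ℝ := -Real.log δ with hT
  have hT0 : 0 < T := by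
    have := Real.log_neg hδ0 hδ1; simp [hT]; linarith
  set Ω : Set ℝ := Set.Icc (-(T+1)) 1 with hΩ
  have hΩmeas : MeasurableSet Ω := measurableSet_Icc
  have hΩfin : volume Ω ≠ ⊤ := by
    rw [hΩ, Real.volume_Icc]; exact ENNReal.ofReal_ne_top
  obtain ⟨B, hBsub, hBmeas, hBμ, hunif⟩ :=
    tendstoUniformlyOn_of_ae_tendsto (μ := volume) hmeas
      (stronglyMeasurable_const : StronglyMeasurable (fun _ : ℝ => (0:ℝ)))
      hΩmeas hΩfin (ae_of_all _ (fun x _ => hpt x)) (show (0:ℝ) < 1/4 by norm_num)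
  rw [Metric.tendstoUniformlyOn_iff] at hunif
  obtain ⟨N, hN⟩ := eventually_atTop.1 (hunif (ε/2) (by positivity))
  filter_upwards [eventually_ge_atTop N, eventually_ge_atTop 1] with ℓ hℓN hℓ1
  intro k hkδ hkℓ
  have hℓpos : (0:ℝ) < ℓ := by exact_mod_cast hℓ1
  have hk1 : 1 ≤ k := by
    by_contra hc
    push_neg at hc
    interval_cases k
    simp at hkδ
    nlinarith
  have hkpos : (0:ℝ) < k := by exact_mod_cast hk1
  set t : ℝ := Real.log ((k:ℝ)/ℓ) with ht
  have hkl_pos : (0:ℝ) < (k:ℝ)/ℓ := by positivity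
  have ht0 : t ≤ 0 := Real.log_nonpos (le_of_lt hkl_pos)
    (by rw [div_le_one hℓpos]; exact_mod_cast hkℓ)
  have htT : -T ≤ t := by
    rw [hT, neg_neg]
    apply Real.log_le_log hδ0
    rw [le_div_iff₀ hℓpos]
    exact hkδ
  -- good point u
  obtain ⟨u, hu⟩ : (Set.Icc (0:ℝ) 1 \ (B ∪ (fun u : ℝ => t - u) ⁻¹' B)).Nonempty := by
    by_contra hc
    rw [Set.not_nonempty_iff_eq_empty, Set.diff_eq_empty] at hc
    have hmp : MeasurePreserving (fun u : ℝ => t - u) volume volume := by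
      have h1 : MeasurePreserving (fun u : ℝ => -u) volume volume :=
        Measure.measurePreserving_neg volume
      have h2 : MeasurePreserving (fun u : ℝ => t + u) volume volume :=
        measurePreserving_add_left volume t
      simpa [Function.comp_def, sub_eq_add_neg] using h2.comp h1
    have hle : volume (Set.Icc (0:ℝ) 1) ≤ volume B + volume ((fun u : ℝ => t - u) ⁻¹' B) :=
      le_trans (measure_mono hc) (measure_union_le _ _)
    rw [hmp.measure_preimage hBmeas.nullMeasurableSet] at hle
    rw [Real.volume_Icc] at hle
    have : ENNReal.ofReal (1 - 0) ≤ ENNReal.ofReal (1/4) + ENNReal.ofReal (1/4) :=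
      le_trans hle (add_le_add hBμ hBμ)
    rw [← ENNReal.ofReal_add (by norm_num) (by norm_num)] at this
    rw [ENNReal.ofReal_le_ofReal_iff (by norm_num)] at this
    norm_num at this
  obtain ⟨⟨hu0, hu1⟩, hunotin⟩ := hu
  rw [Set.mem_union] at hunotin
  push_neg at hunotin
  obtain ⟨huB, hsB⟩ := hunotin
  have huE : u ∈ Ω \ B := ⟨⟨by linarith, hu1⟩, huB⟩
  have hsE : t - u ∈ Ω \ B := ⟨⟨by simp; linarith, by linarith⟩, hsB⟩
  set m : ℕ := ⌊Real.exp u * (ℓ:ℝ)⌋₊ with hm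
  have hexpu1 : (1:ℝ) ≤ Real.exp u := Real.one_le_exp hu0
  have hmge : ℓ ≤ m := by
    apply Nat.le_floor
    nlinarith
  -- bound 1
  have hb1 : |h m - h ℓ| < ε/2 := by
    have := hN ℓ hℓN u huE
    rw [dist_eq_norm] at this
    simp only [zero_sub, norm_neg, Real.norm_eq_abs] at this
    rw [abs_of_nonneg (hfnn ℓ u)] at this
    calc |h m - h ℓ| ≤ f ℓ u := le_add_of_nonneg_right (abs_nonneg _)
      _ < ε/2 := this
  -- the value v
  set v : ℝ := Real.exp (t - u) * m with hv
  have hexptu : Real.exp (t-u) * Real.exp u = Real.exp t := by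
    rw [← Real.exp_add]; ring_nf
  have hexpt : Real.exp t = (k:ℝ)/ℓ := Real.exp_log hkl_pos
  have hvle : v ≤ k := by
    have h1 : (m:ℝ) ≤ Real.exp u * ℓ := Nat.floor_le (by positivity)
    have h2 : v ≤ Real.exp (t-u) * (Real.exp u * ℓ) :=
      mul_le_mul_of_nonneg_left h1 (le_of_lt (Real.exp_pos _))
    rw [← mul_assoc, hexptu, hexpt] at h2
    rw [div_mul_cancel₀] at h2
    · exact h2
    · exact ne_of_gt hℓpos
  have hexp_tu_le1 : Real.exp (t - u) ≤ 1 := Real.exp_le_one_iff.2 (by linarith)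
  have hvge : (k:ℝ) - 1 ≤ v := by
    have h1 : Real.exp u * ℓ - 1 < (m:ℝ) := by
      have := Nat.lt_floor_add_one (Real.exp u * (ℓ:ℝ)); rw [← hm] at this; linarith
    have h2 : Real.exp (t-u) * (Real.exp u * ℓ - 1) ≤ v :=
      mul_le_mul_of_nonneg_left (le_of_lt h1) (le_of_lt (Real.exp_pos _))
    have h3 : Real.exp (t-u) * (Real.exp u * ℓ - 1)
        = (k:ℝ) - Real.exp (t-u) := by
      rw [mul_sub, ← mul_assoc, hexptu, hexpt, div_mul_cancel₀ _ (ne_of_gt hℓpos), mul_one]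
    rw [h3] at h2
    linarith
  have hfloor : ⌊v⌋₊ = k ∨ ⌊v⌋₊ + 1 = k := by
    have hvnn : 0 ≤ v := by positivity
    have h1 : ⌊v⌋₊ ≤ k := by
      have h0 : ⌊v⌋₊ ≤ ⌊(k:ℝ)⌋₊ := Nat.floor_le_floor hvle
      simpa using h0
    have h2 : k - 1 ≤ ⌊v⌋₊ := by
      apply Nat.le_floor
      rw [Nat.cast_sub hk1]
      exact_mod_cast hvge
    omega
  -- bound 2
  have hb2 : |h k - h m| < ε/2 := by
    have harg := hN m (le_trans hℓN hmge) (t-u) hsE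
    rw [dist_eq_norm] at harg
    simp only [zero_sub, norm_neg, Real.norm_eq_abs] at harg
    rw [abs_of_nonneg (hfnn m (t-u))] at harg
    rcases hfloor with hcase | hcase
    · calc |h k - h m| = |h ⌊Real.exp (t-u) * (m:ℝ)⌋₊ - h m| := by rw [← hv, hcase]
        _ ≤ f m (t-u) := le_add_of_nonneg_right (abs_nonneg _)
        _ < ε/2 := harg
    · calc |h k - h m| = |h (⌊Real.exp (t-u) * (m:ℝ)⌋₊ + 1) - h m| := by rw [← hv, hcase]
        _ ≤ f m (t-u) := le_add_of_nonneg_left (abs_nonneg _)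
        _ < ε/2 := harg
  calc |h k - h ℓ| ≤ |h k - h m| + |h m - h ℓ| := abs_sub_le _ _ _
    _ ≤ ε/2 + ε/2 := le_of_lt (by exact add_lt_add hb2 hb1)
    _ = ε := by ring

lemma sum_rpow_lb {αv : ℝ} (hα0 : 0 < αv) (hα1 : αv < 1) {a b : ℕ} (ha : 1 ≤ a) (hab : a ≤ b) :
    ((b:ℝ)^αv - (a:ℝ)^αv)/αv ≤ ∑ k ∈ Finset.Ico a b, (k:ℝ)^(αv-1) := by
  have hanti : AntitoneOn (fun x : ℝ => x ^ (αv - 1)) (Set.Icc (a:ℝ) (b:ℝ)) := by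
    intro x hx y hy hxy
    have hx0 : 0 < x := lt_of_lt_of_le (by exact_mod_cast ha) hx.1
    exact Real.rpow_le_rpow_of_nonpos hx0 hxy (by linarith)
  have h := AntitoneOn.integral_le_sum_Ico hab hanti
  have hint : ∫ x in (a:ℝ)..(b:ℝ), x ^ (αv - 1)
      = ((b:ℝ)^αv - (a:ℝ)^αv)/αv := by
    rw [integral_rpow (Or.inl (by linarith : (-1:ℝ) < αv - 1))]
    norm_num
  rw [hint] at h
  exact h

lemma sum_rpow_ub {αv : ℝ} (hα0 : 0 < αv) (hα1 : αv < 1) {a b : ℕ} (ha : 2 ≤ a) (hab : a ≤ b) :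
    ∑ k ∈ Finset.Ico a b, (k:ℝ)^(αv-1) ≤ (b:ℝ)^αv / αv := by
  have h1 : a - 1 ≤ b - 1 := by omega
  have hanti : AntitoneOn (fun x : ℝ => x ^ (αv - 1)) (Set.Icc ((a-1:ℕ):ℝ) ((b-1:ℕ):ℝ)) := by
    intro x hx y hy hxy
    have hx0 : (0:ℝ) < x := by
      have : (1:ℝ) ≤ ((a-1:ℕ):ℝ) := by
        have : 1 ≤ a - 1 := by omega
        exact_mod_cast this
      linarith [hx.1]
    exact Real.rpow_le_rpow_of_nonpos hx0 hxy (by linarith)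
  have h := AntitoneOn.sum_le_integral_Ico h1 hanti
  have hre : ∑ i ∈ Finset.Ico (a-1) (b-1), ((i + 1 : ℕ):ℝ) ^ (αv - 1)
      = ∑ k ∈ Finset.Ico a b, (k:ℝ)^(αv-1) := by
    rw [show Finset.Ico a b = (Finset.Ico (a-1) (b-1)).map (addRightEmbedding 1) by
      rw [Finset.map_add_right_Ico]; congr 1 <;> omega]
    rw [Finset.sum_map]
    rfl
  rw [hre] at h
  have hint : ∫ x in ((a-1:ℕ):ℝ)..((b-1:ℕ):ℝ), x ^ (αv - 1)
      = (((b-1:ℕ):ℝ)^αv - ((a-1:ℕ):ℝ)^αv)/αv := by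
    rw [integral_rpow (Or.inl (by linarith : (-1:ℝ) < αv - 1))]
    norm_num
  rw [hint] at h
  refine le_trans h ?_
  have hb : ((b-1:ℕ):ℝ)^αv - ((a-1:ℕ):ℝ)^αv ≤ (b:ℝ)^αv := by
    have h1 : ((b-1:ℕ):ℝ)^αv ≤ (b:ℝ)^αv :=
      Real.rpow_le_rpow (Nat.cast_nonneg _) (by exact_mod_cast Nat.sub_le b 1) (le_of_lt hα0)
    have h2 : (0:ℝ) ≤ ((a-1:ℕ):ℝ)^αv := Real.rpow_nonneg (Nat.cast_nonneg _) _
    linarith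
  gcongr

lemma Tt_split {a ℓ : ℕ} (h : a ≤ ℓ) :
    Tt αv Cα L ℓ = Tt αv Cα L a + ∑ k ∈ Finset.Ico a ℓ, W αv Cα L k := by
  unfold Tt
  rw [Finset.range_eq_Ico, Finset.range_eq_Ico]
  exact (Finset.sum_Ico_consecutive (fun k => W αv Cα L k) (Nat.zero_le a) h).symm

lemma key_up (hα0 : 0 < αv) (hα1 : αv < 1) (hCα : 0 < Cα) (hLpos : ∀ n, 0 < L n)
    {δ e' : ℝ} (hδ : 0 < δ) (he' : 0 ≤ e') {a ℓ : ℕ}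
    (ha2 : 2 ≤ a) (haℓ : a ≤ ℓ)
    (haδ : δ * ℓ ≤ a) (ha2δ : (a:ℝ) ≤ 2*δ*ℓ)
    (hUCT : ∀ k : ℕ, δ * ℓ ≤ k → k ≤ ℓ → |Real.log (L k) - Real.log (L ℓ)| ≤ e') :
    Rr αv Cα L ℓ ≤ Rr αv Cα L a * (Real.exp e' * (2*δ)^αv) + Real.exp e' := by
  have hℓ1 : 1 ≤ ℓ := le_trans (by omega) haℓ
  have hℓpos : (0:ℝ) < ℓ := by exact_mod_cast hℓ1
  have hapos : (0:ℝ) < a := by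
    have : (1:ℕ) ≤ a := by omega
    exact_mod_cast this
  have hxl : (0:ℝ) < (ℓ:ℝ)^αv := Real.rpow_pos_of_pos hℓpos _
  have hxa : (0:ℝ) < (a:ℝ)^αv := Real.rpow_pos_of_pos hapos _
  have hLl := hLpos ℓ; have hLa := hLpos a
  have hb : ∀ k ∈ Finset.Ico a ℓ, Real.log (L ℓ) - Real.log (L k) ≤ e' := by
    intro k hk
    rw [Finset.mem_Ico] at hk
    have h1 : δ * ℓ ≤ k := le_trans haδ (by exact_mod_cast hk.1)
    have := hUCT k h1 (le_of_lt hk.2)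
    rw [abs_sub_comm] at this
    exact le_trans (le_abs_self _) this
  have hblk2 : ∑ k ∈ Finset.Ico a ℓ, W αv Cα L k
      ≤ Real.exp e' * Cα * (L ℓ)⁻¹ * ((ℓ:ℝ)^αv / αv) := by
    refine le_trans (block_up (αv := αv) hCα hLpos hb) ?_
    apply mul_le_mul_of_nonneg_left (sum_rpow_ub hα0 hα1 ha2 haℓ)
    positivity
  have hTa := Tt_nonneg (αv := αv) hCα hLpos a
  set X : ℝ := (αv * L ℓ) / (Cα * (ℓ:ℝ)^αv) with hX
  set Y : ℝ := (αv * L a) / (Cα * (a:ℝ)^αv) with hY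
  have hXpos : 0 < X := by rw [hX]; positivity
  have hRl : Rr αv Cα L ℓ = Tt αv Cα L ℓ * X := by
    rw [Rr, hX, mul_div_assoc]
  have hRa : Rr αv Cα L a = Tt αv Cα L a * Y := by
    rw [Rr, hY, mul_div_assoc]
  rw [hRl, hRa, Tt_split (αv := αv) (Cα := Cα) (L := L) haℓ, add_mul]
  have hXY : X ≤ Y * (Real.exp e' * (2*δ)^αv) := by
    have hLℓa : L ℓ ≤ Real.exp e' * L a := by
      have h1 := hUCT a haδ haℓ
      have h2 : Real.log (L ℓ) ≤ e' + Real.log (L a) := by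
        have := abs_le.1 h1
        linarith [this.1]
      calc L ℓ = Real.exp (Real.log (L ℓ)) := (Real.exp_log hLl).symm
        _ ≤ Real.exp (e' + Real.log (L a)) := Real.exp_le_exp.2 h2
        _ = Real.exp e' * L a := by rw [Real.exp_add, Real.exp_log hLa]
    have haα : (a:ℝ)^αv ≤ (2*δ)^αv * (ℓ:ℝ)^αv := by
      calc (a:ℝ)^αv ≤ (2*δ*ℓ)^αv :=
            Real.rpow_le_rpow (Nat.cast_nonneg _) ha2δ (le_of_lt hα0)
        _ = (2*δ)^αv * (ℓ:ℝ)^αv := Real.mul_rpow (by positivity) (Nat.cast_nonneg _)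
    rw [hX, hY, div_mul_eq_mul_div, div_le_div_iff₀ (by positivity) (by positivity)]
    have hmul : L ℓ * (a:ℝ)^αv ≤ (Real.exp e' * L a) * ((2*δ)^αv * (ℓ:ℝ)^αv) :=
      mul_le_mul hLℓa haα (le_of_lt hxa) (by positivity)
    have hαCα : (0:ℝ) ≤ αv * Cα := by positivity
    nlinarith [mul_le_mul_of_nonneg_left hmul hαCα]
  have h1 : Tt αv Cα L a * X ≤ Tt αv Cα L a * Y * (Real.exp e' * (2*δ)^αv) := by
    rw [mul_assoc]
    exact mul_le_mul_of_nonneg_left hXY hTa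
  have h2 : (∑ k ∈ Finset.Ico a ℓ, W αv Cα L k) * X ≤ Real.exp e' := by
    have := mul_le_mul_of_nonneg_right hblk2 (le_of_lt hXpos)
    refine le_trans this (le_of_eq ?_)
    rw [hX]
    field_simp
  linarith

lemma key_lo (hα0 : 0 < αv) (hα1 : αv < 1) (hCα : 0 < Cα) (hLpos : ∀ n, 0 < L n)
    {δ e' : ℝ} (hδ : 0 < δ) (he' : 0 ≤ e') {a ℓ : ℕ}
    (ha2 : 2 ≤ a) (haℓ : a ≤ ℓ)
    (haδ : δ * ℓ ≤ a) (ha2δ : (a:ℝ) ≤ 2*δ*ℓ)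
    (hUCT : ∀ k : ℕ, δ * ℓ ≤ k → k ≤ ℓ → |Real.log (L k) - Real.log (L ℓ)| ≤ e') :
    Real.exp (-e') * (1 - (2*δ)^αv) ≤ Rr αv Cα L ℓ := by
  have hℓ1 : 1 ≤ ℓ := le_trans (by omega) haℓ
  have hℓpos : (0:ℝ) < ℓ := by exact_mod_cast hℓ1
  have hxl : (0:ℝ) < (ℓ:ℝ)^αv := Real.rpow_pos_of_pos hℓpos _
  have hLl := hLpos ℓ
  have hb : ∀ k ∈ Finset.Ico a ℓ, Real.log (L k) - Real.log (L ℓ) ≤ e' := by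
    intro k hk
    rw [Finset.mem_Ico] at hk
    have h1 : δ * ℓ ≤ k := le_trans haδ (by exact_mod_cast hk.1)
    have := hUCT k h1 (le_of_lt hk.2)
    exact le_trans (le_abs_self _) this
  have hblk : Real.exp (-e') * Cα * (L ℓ)⁻¹ * (((ℓ:ℝ)^αv - (a:ℝ)^αv)/αv)
      ≤ ∑ k ∈ Finset.Ico a ℓ, W αv Cα L k := by
    refine le_trans ?_ (block_lo (αv := αv) hCα hLpos hb)
    apply mul_le_mul_of_nonneg_left (sum_rpow_lb hα0 hα1 (by omega) haℓ)
    positivity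
  have hTa := Tt_nonneg (αv := αv) hCα hLpos a
  set X : ℝ := (αv * L ℓ) / (Cα * (ℓ:ℝ)^αv) with hX
  have hXpos : 0 < X := by rw [hX]; positivity
  have hRl : Rr αv Cα L ℓ = Tt αv Cα L ℓ * X := by
    rw [Rr, hX, mul_div_assoc]
  rw [hRl, Tt_split (αv := αv) (Cα := Cα) (L := L) haℓ, add_mul]
  have h2 : Real.exp (-e') * (1 - (a:ℝ)^αv/(ℓ:ℝ)^αv)
      ≤ (∑ k ∈ Finset.Ico a ℓ, W αv Cα L k) * X := by
    have := mul_le_mul_of_nonneg_right hblk (le_of_lt hXpos)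
    refine le_trans (le_of_eq ?_) this
    rw [hX]
    field_simp
  have haα : (a:ℝ)^αv/(ℓ:ℝ)^αv ≤ (2*δ)^αv := by
    rw [div_le_iff₀ hxl]
    calc (a:ℝ)^αv ≤ (2*δ*ℓ)^αv :=
          Real.rpow_le_rpow (Nat.cast_nonneg _) ha2δ (le_of_lt hα0)
      _ = (2*δ)^αv * (ℓ:ℝ)^αv := Real.mul_rpow (by positivity) (Nat.cast_nonneg _)
  have h3 : Real.exp (-e') * (1 - (2*δ)^αv) ≤ Real.exp (-e') * (1 - (a:ℝ)^αv/(ℓ:ℝ)^αv) := by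
    apply mul_le_mul_of_nonneg_left _ (le_of_lt (Real.exp_pos _))
    linarith
  have h4 : (0:ℝ) ≤ Tt αv Cα L a * X := mul_nonneg hTa (le_of_lt hXpos)
  linarith

/-- Given `0 < m < 1`, produce `δ` with `0 < δ`, `2δ < 1` and `(2δ)^αv = m`. -/
lemma exists_delta (hα0 : 0 < αv) {m : ℝ} (hm0 : 0 < m) (hm1 : m < 1) :
    ∃ δ : ℝ, 0 < δ ∧ 2*δ < 1 ∧ (2*δ)^αv = m := by
  refine ⟨m ^ αv⁻¹ / 2, by positivity, ?_, ?_⟩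
  · have : m ^ αv⁻¹ < 1 := Real.rpow_lt_one (le_of_lt hm0) hm1 (by positivity)
    linarith
  · rw [show 2 * (m ^ αv⁻¹ / 2) = m ^ αv⁻¹ by ring,
      ← Real.rpow_mul (le_of_lt hm0) αv⁻¹ αv, inv_mul_cancel₀ (ne_of_gt hα0), Real.rpow_one]

/-- Eventual geometric conditions for `a ℓ = ⌈δℓ⌉₊ + 2`. -/
lemma a_conditions {δ : ℝ} (hδ0 : 0 < δ) (h2δ : 2*δ < 1) :
    ∀ᶠ ℓ : ℕ in atTop,
      2 ≤ ⌈δ * ℓ⌉₊ + 2 ∧ (⌈δ * ℓ⌉₊ + 2) < ℓ ∧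
      δ * ℓ ≤ ((⌈δ * ℓ⌉₊ + 2 : ℕ) : ℝ) ∧ ((⌈δ * ℓ⌉₊ + 2 : ℕ) : ℝ) ≤ 2*δ*ℓ := by
  have hδℓ : Tendsto (fun ℓ : ℕ => δ * ℓ) atTop atTop :=
    Tendsto.const_mul_atTop hδ0 tendsto_natCast_atTop_atTop
  filter_upwards [hδℓ.eventually_ge_atTop 3, eventually_ge_atTop 1] with ℓ h3 hℓ1
  have hℓpos : (0:ℝ) < ℓ := by exact_mod_cast hℓ1
  have hceil : (⌈δ * ℓ⌉₊ : ℝ) < δ * ℓ + 1 := Nat.ceil_lt_add_one (by positivity)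
  have hceil2 : δ * ℓ ≤ (⌈δ * ℓ⌉₊ : ℝ) := Nat.le_ceil _
  have hcast : ((⌈δ * ℓ⌉₊ + 2 : ℕ) : ℝ) = (⌈δ * ℓ⌉₊ : ℝ) + 2 := by push_cast; ring
  refine ⟨by omega, ?_, ?_, ?_⟩
  · have h1 : ((⌈δ * ℓ⌉₊ + 2 : ℕ) : ℝ) ≤ 2*δ*ℓ := by rw [hcast]; nlinarith
    have h2 : (2*δ)*ℓ < ℓ := by nlinarith
    have : ((⌈δ * ℓ⌉₊ + 2 : ℕ) : ℝ) < (ℓ:ℝ) := by nlinarith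
    exact_mod_cast this
  · rw [hcast]; linarith
  · rw [hcast]; nlinarith

lemma global_bound (hα0 : 0 < αv) (hα1 : αv < 1) (hCα : 0 < Cα) (hL : SlowlyVarying L) :
    ∃ Bd : ℝ, ∀ ℓ, Rr αv Cα L ℓ ≤ Bd := by
  set m : ℝ := min ((4 * Real.exp 1)⁻¹) (1/2) with hm
  have hexp1 : (1:ℝ) < Real.exp 1 := by
    have := Real.add_one_le_exp 1; linarith [Real.exp_one_gt_d9]
  have hm0 : 0 < m := by
    apply lt_min _ (by norm_num)
    positivity
  have hm1 : m < 1 := lt_of_le_of_lt (min_le_right _ _) (by norm_num)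
  have hem : Real.exp 1 * m ≤ 1/4 := by
    have h1 : m ≤ (4 * Real.exp 1)⁻¹ := min_le_left _ _
    have h2 : Real.exp 1 * (4 * Real.exp 1)⁻¹ = 1/4 := by
      field_simp
    calc Real.exp 1 * m ≤ Real.exp 1 * (4 * Real.exp 1)⁻¹ :=
          mul_le_mul_of_nonneg_left h1 (le_of_lt (Real.exp_pos 1))
      _ = 1/4 := h2
  obtain ⟨δ, hδ0, h2δ1, h2δα⟩ := exists_delta hα0 hm0 hm1
  have hδ1 : δ < 1 := by linarith
  obtain ⟨N₀, hN₀⟩ := eventually_atTop.1 ((uct hL hδ0 hδ1 one_pos).and (a_conditions hδ0 h2δ1))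
  set Bd : ℝ := 4 * Real.exp 1 + ∑ j ∈ Finset.range (N₀+1), Rr αv Cα L j with hBd
  have hsum_nn : 0 ≤ ∑ j ∈ Finset.range (N₀+1), Rr αv Cα L j :=
    Finset.sum_nonneg fun j _ => Rr_nonneg hα0 hCα hL.1 j
  refine ⟨Bd, ?_⟩
  intro ℓ
  induction ℓ using Nat.strong_induction_on with
  | _ ℓ ih =>
    by_cases hcase : ℓ ≤ N₀
    · have h1 : Rr αv Cα L ℓ ≤ ∑ j ∈ Finset.range (N₀+1), Rr αv Cα L j :=
        Finset.single_le_sum (fun j _ => Rr_nonneg hα0 hCα hL.1 j)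
          (Finset.mem_range.2 (by omega))
      have : (0:ℝ) ≤ 4 * Real.exp 1 := by positivity
      rw [hBd]; linarith
    · push_neg at hcase
      obtain ⟨hUCT, ha2, haℓ, haδ, ha2δ⟩ := hN₀ ℓ (by omega)
      set a : ℕ := ⌈δ * ℓ⌉₊ + 2
      have hkey := key_up hα0 hα1 hCα hL.1 hδ0 zero_le_one ha2 (le_of_lt haℓ) haδ ha2δ hUCT
      rw [h2δα] at hkey
      have hIH := ih a haℓ
      have hRa := Rr_nonneg (L := L) hα0 hCα hL.1 a
      have h2 : Rr αv Cα L a * (Real.exp 1 * m) ≤ Bd * (1/4) := by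
        calc Rr αv Cα L a * (Real.exp 1 * m) ≤ Bd * (Real.exp 1 * m) :=
              mul_le_mul_of_nonneg_right hIH (by positivity)
          _ ≤ Bd * (1/4) := by
              apply mul_le_mul_of_nonneg_left hem
              rw [hBd]; positivity
      have hBd4 : 4 * Real.exp 1 ≤ Bd := by rw [hBd]; linarith
      calc Rr αv Cα L ℓ ≤ Rr αv Cα L a * (Real.exp 1 * m) + Real.exp 1 := hkey
        _ ≤ Bd * (1/4) + Real.exp 1 := by linarith
        _ ≤ Bd := by nlinarith [Real.exp_pos 1]

lemma core (hα0 : 0 < αv) (hα1 : αv < 1) (hCα : 0 < Cα) (hL : SlowlyVarying L) :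
    Tendsto (Rr αv Cα L) atTop (nhds 1) := by
  obtain ⟨Bd, hBd⟩ := global_bound hα0 hα1 hCα hL
  have hBd0 : (0:ℝ) ≤ Bd := le_trans (Rr_nonneg hα0 hCα hL.1 0) (hBd 0)
  rw [Metric.tendsto_atTop]
  intro ε hε
  set ε₁ : ℝ := min (ε/8) (1/2) with hε₁
  have hε₁0 : 0 < ε₁ := lt_min (by positivity) (by norm_num)
  have hε₁h : ε₁ ≤ 1/2 := min_le_right _ _
  have hε₁ε : ε₁ ≤ ε/8 := min_le_left _ _
  have hexp_up : Real.exp ε₁ ≤ 1 + 2*ε₁ := by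
    have h1 : 1 - ε₁ ≤ Real.exp (-ε₁) := by
      have := Real.add_one_le_exp (-ε₁); linarith
    have h2 : 0 < 1 - ε₁ := by linarith
    have h3 : Real.exp ε₁ = (Real.exp (-ε₁))⁻¹ := by
      rw [← Real.exp_neg]; ring_nf
    rw [h3]
    have h4 : (Real.exp (-ε₁))⁻¹ ≤ (1 - ε₁)⁻¹ := by
      apply inv_anti₀ h2 h1
    refine le_trans h4 ?_
    rw [inv_le_iff_one_le_mul₀ h2]
    nlinarith
  have hexp_lo : 1 - ε₁ ≤ Real.exp (-ε₁) := by
    have := Real.add_one_le_exp (-ε₁); linarith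
  have hexpe : Real.exp ε₁ ≤ Real.exp 1 := Real.exp_le_exp.2 (by linarith)
  set m₂ : ℝ := min (ε₁ / (Real.exp 1 * (Bd+1))) (min ε₁ (1/2)) with hm₂
  have hm₂0 : 0 < m₂ := by
    apply lt_min (by positivity) (lt_min hε₁0 (by norm_num))
  have hm₂1 : m₂ < 1 := lt_of_le_of_lt (le_trans (min_le_right _ _) (min_le_right _ _)) (by norm_num)
  have hm₂ε : m₂ ≤ ε₁ := le_trans (min_le_right _ _) (min_le_left _ _)
  have hA : Bd * (Real.exp ε₁ * m₂) ≤ ε₁ := by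
    have h1 : m₂ ≤ ε₁ / (Real.exp 1 * (Bd+1)) := min_le_left _ _
    have h2 : Real.exp ε₁ * m₂ ≤ Real.exp 1 * (ε₁ / (Real.exp 1 * (Bd+1))) := by
      apply mul_le_mul hexpe h1 (le_of_lt hm₂0) (le_of_lt (Real.exp_pos 1))
    have h3 : Real.exp 1 * (ε₁ / (Real.exp 1 * (Bd+1))) = ε₁ / (Bd+1) := by
      field_simp
    rw [h3] at h2
    have h4 : Bd * (Real.exp ε₁ * m₂) ≤ Bd * (ε₁ / (Bd+1)) :=
      mul_le_mul_of_nonneg_left h2 hBd0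
    refine le_trans h4 ?_
    rw [div_eq_mul_inv, ← mul_assoc]
    rw [show Bd * ε₁ * (Bd+1)⁻¹ = ε₁ * (Bd * (Bd+1)⁻¹) by ring]
    have h5 : Bd * (Bd+1)⁻¹ ≤ 1 := by
      have hb1 : (0:ℝ) < Bd + 1 := by linarith
      rw [mul_inv_le_iff₀ hb1]
      linarith
    nlinarith
  obtain ⟨δ, hδ0, h2δ1, h2δα⟩ := exists_delta hα0 hm₂0 hm₂1
  have hδ1 : δ < 1 := by linarith
  obtain ⟨N, hN⟩ := eventually_atTop.1 ((uct hL hδ0 hδ1 hε₁0).and (a_conditions hδ0 h2δ1))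
  refine ⟨N, fun ℓ hℓ => ?_⟩
  obtain ⟨hUCT, ha2, haℓ, haδ, ha2δ⟩ := hN ℓ hℓ
  have hup := key_up hα0 hα1 hCα hL.1 hδ0 (le_of_lt hε₁0) ha2 (le_of_lt haℓ) haδ ha2δ hUCT
  have hlo := key_lo hα0 hα1 hCα hL.1 hδ0 (le_of_lt hε₁0) ha2 (le_of_lt haℓ) haδ ha2δ hUCT
  rw [h2δα] at hup hlo
  have hup2 : Rr αv Cα L ℓ ≤ 1 + 3*ε₁ := by
    have h1 : Rr αv Cα L (⌈δ * ℓ⌉₊ + 2) * (Real.exp ε₁ * m₂) ≤ Bd * (Real.exp ε₁ * m₂) :=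
      mul_le_mul_of_nonneg_right (hBd _) (by positivity)
    calc Rr αv Cα L ℓ ≤ Rr αv Cα L (⌈δ * ℓ⌉₊ + 2) * (Real.exp ε₁ * m₂) + Real.exp ε₁ := hup
      _ ≤ ε₁ + (1 + 2*ε₁) := by linarith [le_trans h1 hA]
      _ = 1 + 3*ε₁ := by ring
  have hlo2 : 1 - 2*ε₁ ≤ Rr αv Cα L ℓ := by
    have h1 : (1 - ε₁) * (1 - ε₁) ≤ Real.exp (-ε₁) * (1 - m₂) := by
      apply mul_le_mul hexp_lo (by linarith) (by linarith) (le_of_lt (Real.exp_pos _))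
    refine le_trans ?_ (le_trans h1 hlo)
    nlinarith
  rw [Real.dist_eq, abs_lt]
  constructor
  · linarith
  · have : 3*ε₁ ≤ 3*ε/8 := by linarith
    linarith

lemma W_pos (hα1 : αv < 1) (hCα : 0 < Cα) (hLpos : ∀ n, 0 < L n) {k : ℕ} (hk : 1 ≤ k) :
    0 < W αv Cα L k := by
  unfold W
  have hLk := hLpos k
  have hkpos : (0:ℝ) < k := by exact_mod_cast hk
  have : (0:ℝ) < (k:ℝ)^(1-αv) := Real.rpow_pos_of_pos hkpos _
  positivity

lemma Tt_pos (hα1 : αv < 1) (hCα : 0 < Cα) (hLpos : ∀ n, 0 < L n) {ℓ : ℕ} (hℓ : 2 ≤ ℓ) :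
    0 < Tt αv Cα L ℓ := by
  have h1 : Tt αv Cα L 2 ≤ Tt αv Cα L ℓ := Tt_mono hCα hLpos hℓ
  have h2 : 0 < Tt αv Cα L 2 := by
    unfold Tt
    rw [Finset.sum_range_succ, Finset.sum_range_one]
    have := W_nonneg (αv := αv) hCα hLpos 0
    have := W_pos (αv := αv) hα1 hCα hLpos (le_refl 1)
    linarith
  linarith

lemma Tt_atTop (hα0 : 0 < αv) (hα1 : αv < 1) (hCα : 0 < Cα) (hL : SlowlyVarying L) :
    Tendsto (Tt αv Cα L) atTop atTop := by
  rcases tendsto_of_monotone (Tt_mono (αv := αv) hCα hL.1) with h | ⟨l, hl⟩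
  · exact h
  · exfalso
    have hcore := core hα0 hα1 hCα hL
    have hT2 : 0 < Tt αv Cα L 2 := Tt_pos hα1 hCα hL.1 (le_refl 2)
    have hl2 : Tt αv Cα L 2 ≤ l := Monotone.ge_of_tendsto (Tt_mono hCα hL.1) hl 2
    have hlpos : 0 < l := lt_of_lt_of_le hT2 hl2
    have hquot : Tendsto (fun ℓ => Rr αv Cα L ℓ / Tt αv Cα L ℓ) atTop (nhds (1/l)) := by
      have := hcore.div hl (ne_of_gt hlpos)
      simpa [Pi.div_def] using this
    have hQP : Tendsto (fun ℓ : ℕ => (αv * L ℓ) / (Cα * (ℓ:ℝ)^αv)) atTop (nhds (1/l)) := by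
      refine hquot.congr' ?_
      filter_upwards [eventually_ge_atTop 2] with ℓ hℓ
      have hTpos := Tt_pos (αv := αv) hα1 hCα hL.1 hℓ
      rw [Rr, mul_div_assoc]
      exact mul_div_cancel_left₀ _ (ne_of_gt hTpos)
    have h2ℓ : Tendsto (fun ℓ : ℕ => 2 * ℓ) atTop atTop :=
      tendsto_atTop_mono (fun n => by change n ≤ 2*n; omega) tendsto_id
    have hQP2 : Tendsto (fun ℓ : ℕ => (αv * L (2*ℓ)) / (Cα * ((2*ℓ:ℕ):ℝ)^αv)) atTop (nhds (1/l)) :=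
      hQP.comp h2ℓ
    have hratio : Tendsto (fun ℓ : ℕ => L (2*ℓ) / L ℓ) atTop (nhds ((1/l)/(1/l) * 2^αv)) := by
      have hdiv := (hQP2.div hQP (by positivity)).mul_const ((2:ℝ)^αv)
      refine hdiv.congr' ?_
      filter_upwards [eventually_ge_atTop 1] with ℓ hℓ
      have hℓpos : (0:ℝ) < ℓ := by exact_mod_cast hℓ
      have hx : (0:ℝ) < (ℓ:ℝ)^αv := Real.rpow_pos_of_pos hℓpos _
      have hcast : ((2*ℓ:ℕ):ℝ) = 2 * (ℓ:ℝ) := by push_cast; ring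
      have h2x : ((2*ℓ:ℕ):ℝ)^αv = 2^αv * (ℓ:ℝ)^αv := by
        rw [hcast, Real.mul_rpow (by norm_num) (le_of_lt hℓpos)]
      have h2α : (0:ℝ) < (2:ℝ)^αv := Real.rpow_pos_of_pos (by norm_num) _
      have hLℓ := hL.1 ℓ; have hL2ℓ := hL.1 (2*ℓ)
      simp only [Pi.div_apply]
      rw [h2x]
      field_simp [ne_of_gt hα0, ne_of_gt hCα, ne_of_gt hLℓ, ne_of_gt hx, ne_of_gt h2α]
    have hone : Tendsto (fun ℓ : ℕ => L (2*ℓ) / L ℓ) atTop (nhds 1) := by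
      have h2 := hL.2 2 (by norm_num)
      refine h2.congr fun ℓ => ?_
      congr 1
      rw [show (2:ℝ) * (ℓ:ℝ) = ((2*ℓ:ℕ):ℝ) by push_cast; ring, Nat.floor_natCast]
    have huniq := tendsto_nhds_unique hratio hone
    rw [div_self (by positivity : (1:ℝ)/l ≠ 0), one_mul] at huniq
    have h21 : (1:ℝ) < 2^αv := by
      rw [Real.one_lt_rpow_iff_of_pos (by norm_num : (0:ℝ) < 2)]
      left
      exact ⟨by norm_num, hα0⟩
    rw [huniq] at h21
    linarith

lemma sum_ratio (hα0 : 0 < αv) (hα1 : αv < 1) (hCα : 0 < Cα) (hL : SlowlyVarying L)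
    {u : ℕ → ℝ}
    (hu : Tendsto (fun k : ℕ => u k / W αv Cα L k) atTop (nhds 1)) :
    Tendsto (fun ℓ : ℕ => (∑ k ∈ Finset.range ℓ, u k) / Tt αv Cα L ℓ) atTop (nhds 1) := by
  have hT := Tt_atTop hα0 hα1 hCα hL
  rw [Metric.tendsto_atTop]
  intro ε hε
  set ε₂ : ℝ := min (ε/4) 1 with hε₂
  have hε₂0 : 0 < ε₂ := lt_min (by positivity) one_pos
  have hε₂ε : ε₂ ≤ ε/4 := min_le_left _ _
  obtain ⟨K₀, hK₀⟩ := Metric.tendsto_atTop.1 hu ε₂ hε₂0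
  set K : ℕ := max K₀ 1 with hK
  set C : ℝ := ∑ j ∈ Finset.range K, |u j - W αv Cα L j| with hC
  have hC0 : 0 ≤ C := Finset.sum_nonneg fun j _ => abs_nonneg _
  have hev := (hT.eventually_ge_atTop (C/ε₂ + 1)).and
    ((eventually_ge_atTop K).and (eventually_ge_atTop 2))
  rw [eventually_atTop] at hev
  obtain ⟨N, hN⟩ := hev
  refine ⟨N, fun ℓ hℓ => ?_⟩
  obtain ⟨hTl, hKl, h2l⟩ := hN ℓ hℓ
  have hTpos : 0 < Tt αv Cα L ℓ := Tt_pos hα1 hCα hL.1 h2l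
  have hbound : |(∑ k ∈ Finset.range ℓ, u k) - Tt αv Cα L ℓ| ≤ C + ε₂ * Tt αv Cα L ℓ := by
    have hsub : (∑ k ∈ Finset.range ℓ, u k) - Tt αv Cα L ℓ
        = ∑ k ∈ Finset.range ℓ, (u k - W αv Cα L k) := by
      rw [Tt, Finset.sum_sub_distrib]
    rw [hsub]
    refine le_trans (Finset.abs_sum_le_sum_abs _ _) ?_
    have hsplit : ∑ k ∈ Finset.range ℓ, |u k - W αv Cα L k|
        = C + ∑ k ∈ Finset.Ico K ℓ, |u k - W αv Cα L k| := by
      rw [hC, Finset.range_eq_Ico, Finset.range_eq_Ico]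
      exact (Finset.sum_Ico_consecutive _ (Nat.zero_le K) hKl).symm
    rw [hsplit]
    have htail : ∑ k ∈ Finset.Ico K ℓ, |u k - W αv Cα L k|
        ≤ ε₂ * Tt αv Cα L ℓ := by
      have h1 : ∀ k ∈ Finset.Ico K ℓ, |u k - W αv Cα L k| ≤ ε₂ * W αv Cα L k := by
        intro k hk
        rw [Finset.mem_Ico] at hk
        have hk1 : 1 ≤ k := le_trans (le_max_right _ _) hk.1
        have hkK₀ : K₀ ≤ k := le_trans (le_max_left _ _) hk.1
        have hWpos := W_pos (αv := αv) hα1 hCα hL.1 hk1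
        have hdist := hK₀ k hkK₀
        rw [Real.dist_eq] at hdist
        have heq : u k - W αv Cα L k = (u k / W αv Cα L k - 1) * W αv Cα L k := by
          field_simp
        rw [heq, abs_mul, abs_of_pos hWpos]
        exact mul_le_mul_of_nonneg_right (le_of_lt hdist) (le_of_lt hWpos)
      refine le_trans (Finset.sum_le_sum h1) ?_
      rw [← Finset.mul_sum]
      apply mul_le_mul_of_nonneg_left _ (le_of_lt hε₂0)
      rw [Tt]
      apply Finset.sum_le_sum_of_subset_of_nonneg
      · rw [Finset.range_eq_Ico]
        exact Finset.Ico_subset_Ico (Nat.zero_le _) (le_refl _)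
      · intro k _ _
        exact W_nonneg hCα hL.1 k
    linarith
  have hdisteq : dist ((∑ k ∈ Finset.range ℓ, u k) / Tt αv Cα L ℓ) 1
      = |(∑ k ∈ Finset.range ℓ, u k) - Tt αv Cα L ℓ| / Tt αv Cα L ℓ := by
    rw [Real.dist_eq]
    have h1 : (∑ k ∈ Finset.range ℓ, u k) / Tt αv Cα L ℓ - 1
        = ((∑ k ∈ Finset.range ℓ, u k) - Tt αv Cα L ℓ) / Tt αv Cα L ℓ := by
      field_simp
    rw [h1, abs_div, abs_of_pos hTpos]
  rw [hdisteq]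
  have hCT : C / Tt αv Cα L ℓ ≤ ε₂ := by
    rw [div_le_iff₀ hTpos]
    have h1 : C / ε₂ ≤ Tt αv Cα L ℓ := by linarith
    rw [div_le_iff₀ hε₂0] at h1
    linarith [mul_comm ε₂ (Tt αv Cα L ℓ)]
  calc |(∑ k ∈ Finset.range ℓ, u k) - Tt αv Cα L ℓ| / Tt αv Cα L ℓ
      ≤ (C + ε₂ * Tt αv Cα L ℓ) / Tt αv Cα L ℓ := by
        gcongr
    _ = C / Tt αv Cα L ℓ + ε₂ := by
        rw [add_div, mul_div_assoc, div_self (ne_of_gt hTpos), mul_one]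
    _ ≤ ε₂ + ε₂ := by linarith
    _ < ε := by linarith

end KaramataAux

/-- Karamata's theorem for sums: if `u(k) ∼ C_α/(L(k) k^{1−α})` as `k → ∞`, with
`α ∈ (0,1)`, `C_α > 0` and `L` slowly varying, then
`∑_{k=0}^{ℓ−1} u(k) ∼ C_α ℓ^α/(α L(ℓ))` as `ℓ → ∞`. -/
theorem karamata_sum_asymptotic (α Cα : ℝ) (hα : 0 < α ∧ α < 1) (hCα : 0 < Cα)
    (L u : ℕ → ℝ) (hL : SlowlyVarying L) (hupos : ∀ k, 0 < u k)
    (hu : Tendsto (fun k : ℕ => u k / (Cα / (L k * (k : ℝ) ^ (1 - α)))) atTop (nhds 1)) :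
    Tendsto
      (fun ℓ : ℕ => (∑ k ∈ Finset.range ℓ, u k) / (Cα * (ℓ : ℝ) ^ α / (α * L ℓ)))
      atTop (nhds 1) := by
  obtain ⟨hα0, hα1⟩ := hα
  have hcore := KaramataAux.core hα0 hα1 hCα hL
  have hsr := KaramataAux.sum_ratio hα0 hα1 hCα hL (u := u) hu
  have hmul := hsr.mul hcore
  rw [mul_one] at hmul
  refine hmul.congr' ?_
  filter_upwards [eventually_ge_atTop 2] with ℓ hℓ
  have hTpos := KaramataAux.Tt_pos hα1 hCα hL.1 hℓ
  have hℓ1 : (1:ℕ) ≤ ℓ := by omega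
  have hℓpos : (0:ℝ) < ℓ := by exact_mod_cast hℓ1
  have hx : (0:ℝ) < (ℓ:ℝ)^α := Real.rpow_pos_of_pos hℓpos _
  have hLl := hL.1 ℓ
  rw [KaramataAux.Rr]
  field_simp
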